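/- For the Burer–Letchford instance with Q = [[−2.25, −3, −3], [−3, 0, −0.5], [−3, −0.5, 1]] and q = (3, 1, 0), the maximum of xᵀQx + qᵀx over the unit box [0,1]³ equals 1; that is, xᵀQx + qᵀx ≤ 1 for all x ∈ [0,1]³, and there exists x ∈ [0,1]³ achieving xᵀQx + qᵀx = 1. -/

import Mathlib

/-- For the Burer–Letchford instance, the maximum of `xᵀQx + qᵀx` over the unit box is 1. -/
theorem burer_letchford_max :
    (∀ x : Fin 3 → ℝ, (∀ i, 0 ≤ x i ∧ x i ≤ 1) →
      (∑ i, ∑ j, !![(-2.25 : ℝ), -3, -3; -3, 0, -0.5; -3, -0.5, 1] i j * x i * x j)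
        + ∑ i, ![(3 : ℝ), 1, 0] i * x i ≤ 1) ∧
    (∃ x : Fin 3 → ℝ, (∀ i, 0 ≤ x i ∧ x i ≤ 1) ∧
      (∑ i, ∑ j, !![(-2.25 : ℝ), -3, -3; -3, 0, -0.5; -3, -0.5, 1] i j * x i * x j)
        + ∑ i, ![(3 : ℝ), 1, 0] i * x i = 1) := by
  constructor
  · intro x hx
    obtain ⟨h0a, h1a⟩ := hx 0
    obtain ⟨h0b, h1b⟩ := hx 1
    obtain ⟨h0c, h1c⟩ := hx 2
    simp only [Fin.sum_univ_three, Matrix.cons_val', Matrix.cons_val_zero, Matrix.cons_val_one,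
      Matrix.head_cons, Matrix.empty_val', Matrix.cons_val_fin_one, Matrix.head_fin_const,
      Matrix.cons_val_two, Matrix.tail_cons, Matrix.of_apply]
    nlinarith [sq_nonneg (1.5 * x 0 + x 1 + x 2 - 1), mul_nonneg h0a (sub_nonneg.2 h1b),
      mul_nonneg h0a (sub_nonneg.2 h1c), mul_nonneg h0b (sub_nonneg.2 h1c),
      mul_nonneg h0c (sub_nonneg.2 h1b), mul_nonneg h0b (sub_nonneg.2 h1b),
      mul_nonneg h0c (sub_nonneg.2 h1c), mul_nonneg h0a h0b, mul_nonneg h0a h0c,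
      mul_nonneg (sub_nonneg.2 h1b) (sub_nonneg.2 h1c),
      sq_nonneg (1.5 * x 0 - 1), sq_nonneg (x 1 - x 2), sq_nonneg (x 1 + x 2 - 1)]
  · refine ⟨![0, 1, 1], ?_, ?_⟩
    · intro i; fin_cases i <;> norm_num
    · norm_num [Fin.sum_univ_three, Matrix.cons_val_zero, Matrix.cons_val_one,
        Matrix.cons_val_two, Matrix.head_cons, Matrix.tail_cons]
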